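/- Let μ be an atomless Borel probability measure on ℝ and μ^6 the product measure on (Fin 6 → ℝ). Let A = { x | x 0 < x 1 ∧ x 2 < x 1 ∧ x 3 < x 4 ∧ x 5 < x 4 ∧ ¬(x 1 < x 2 ∧ x 3 < x 2) ∧ ¬(x 2 < x 3 ∧ x 4 < x 3) } (local maxima at positions 1 and 4 and at no position in between) and B = { x | x 0 < x 1 ∧ x 2 < x 1 }. Then μ^6(A) / μ^6(B) = 1/3; i.e. f_m(3) = 1/3. -/

import Mathlib

open MeasureTheory Set ENNReal

namespace FmThreeAux

/-- The "cell" of a permutation: points whose coordinates are strictly increasing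
along `σ`. -/
def cell (σ : Equiv.Perm (Fin 6)) : Set (Fin 6 → ℝ) := {x | StrictMono (x ∘ σ)}

lemma measurable_cell (σ : Equiv.Perm (Fin 6)) : MeasurableSet (cell σ) := by
  have : cell σ = ⋂ (p : Fin 6 × Fin 6), ⋂ (_ : p.1 < p.2), {x | x (σ p.1) < x (σ p.2)} := by
    ext x
    simp only [cell, mem_setOf_eq, mem_iInter, StrictMono, Function.comp_apply]
    exact ⟨fun h p hp => h hp, fun h a b hab => h (a, b) hab⟩
  rw [this]
  exact MeasurableSet.iInter fun p => MeasurableSet.iInter fun _ =>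
    measurableSet_lt (measurable_pi_apply _) (measurable_pi_apply _)

variable (μ : Measure ℝ) [IsProbabilityMeasure μ] [NullSingletonClass μ]

lemma comp_measurePreserving (σ : Equiv.Perm (Fin 6)) :
    MeasurePreserving (fun x : Fin 6 → ℝ => x ∘ σ)
      (Measure.pi fun _ : Fin 6 => μ) (Measure.pi fun _ : Fin 6 => μ) := by
  have h := measurePreserving_piCongrLeft (fun _ : Fin 6 => μ) (σ⁻¹ : Equiv.Perm (Fin 6))
  have hcoe : ⇑(MeasurableEquiv.piCongrLeft (fun _ : Fin 6 => ℝ)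
      ((σ⁻¹ : Equiv.Perm (Fin 6)) : Fin 6 ≃ Fin 6)) = fun x : Fin 6 → ℝ => x ∘ σ := by
    funext x
    funext i
    rw [MeasurableEquiv.coe_piCongrLeft]
    set e : Fin 6 ≃ Fin 6 := ((σ⁻¹ : Equiv.Perm (Fin 6)) : Fin 6 ≃ Fin 6)
    have h2 : (Equiv.piCongrLeft (fun _ : Fin 6 => ℝ) e) x (e (e.symm i)) = x (e.symm i) :=
      Equiv.piCongrLeft_apply_apply (fun _ : Fin 6 => ℝ) e x (e.symm i)
    have h3 : e.symm i = σ i := rfl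
    have h4 : e (e.symm i) = i := e.apply_symm_apply i
    rw [h4, h3] at h2
    exact h2
  rw [hcoe] at h
  exact h

lemma measure_cell_eq (σ : Equiv.Perm (Fin 6)) :
    (Measure.pi fun _ : Fin 6 => μ) (cell σ) = (Measure.pi fun _ : Fin 6 => μ) (cell 1) := by
  have hpre : cell σ = (fun x : Fin 6 → ℝ => x ∘ σ) ⁻¹' (cell 1) := by
    ext x
    simp only [cell, mem_preimage, mem_setOf_eq]
    constructor
    · intro h
      have : ((x ∘ σ) ∘ ⇑(1 : Equiv.Perm (Fin 6))) = x ∘ σ := rfl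
      rw [this]; exact h
    · intro h
      have : ((x ∘ σ) ∘ ⇑(1 : Equiv.Perm (Fin 6))) = x ∘ σ := rfl
      rw [this] at h; exact h
  rw [hpre]
  exact (comp_measurePreserving μ σ).measure_preimage (measurable_cell 1).nullMeasurableSet

lemma cells_disjoint : Pairwise (Function.onFun Disjoint (cell)) := by
  intro σ τ hne
  rw [Function.onFun, Set.disjoint_left]
  intro x h1 h2
  apply hne
  have hg : StrictMono (fun i => σ.symm (τ i)) := by
    intro i j hij
    have hx : (x ∘ σ) (σ.symm (τ i)) < (x ∘ σ) (σ.symm (τ j)) := by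
      simpa using h2 hij
    exact h1.lt_iff_lt.mp hx
  have hsurj : Function.Surjective (fun i => σ.symm (τ i)) :=
    (τ.trans σ.symm).surjective
  let iso : Fin 6 ≃o Fin 6 := StrictMono.orderIsoOfSurjective _ hg hsurj
  have hid : ∀ i, σ.symm (τ i) = i := by
    intro i
    have := Fin.coe_orderIso_apply iso i
    exact Fin.ext this
  have h2 : ∀ i, σ i = τ i := by
    intro i
    have h3 : σ (σ.symm (τ i)) = σ i := congrArg σ (hid i)
    simpa using h3.symm
  exact Equiv.ext h2

lemma map_pair (i j : Fin 6) (hij : i ≠ j) :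
    Measure.map (fun x : Fin 6 → ℝ => (x i, x j)) (Measure.pi fun _ : Fin 6 => μ) =
      μ.prod μ := by
  symm
  refine Measure.prod_eq fun s t hs ht => ?_
  rw [Measure.map_apply ((measurable_pi_apply i).prodMk (measurable_pi_apply j))
    (hs.prod ht)]
  classical
  have hpre : (fun x : Fin 6 → ℝ => (x i, x j)) ⁻¹' (s ×ˢ t) =
      Set.pi Set.univ (fun k => if k = i then s else if k = j then t else Set.univ) := by
    ext x
    simp only [mem_preimage, mem_prod, mem_univ_pi]
    constructor
    · rintro ⟨h1, h2⟩ k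
      split_ifs with h h'
      · subst h; exact h1
      · subst h'; exact h2
      · trivial
    · intro h
      constructor
      · have := h i; simpa using this
      · have := h j; simpa [hij.symm] using this
  rw [hpre, Measure.pi_pi]
  have hsub : ∏ k : Fin 6, μ (if k = i then s else if k = j then t else Set.univ) =
      ∏ k ∈ ({i, j} : Finset (Fin 6)), μ (if k = i then s else if k = j then t else Set.univ) := by
    refine (Finset.prod_subset (Finset.subset_univ _) ?_).symm
    intro k _ hk
    simp only [Finset.mem_insert, Finset.mem_singleton, not_or] at hk
    simp [hk.1, hk.2]
  rw [hsub, Finset.prod_pair hij]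
  simp [hij.symm]

lemma diag_null (i j : Fin 6) (hij : i ≠ j) :
    (Measure.pi fun _ : Fin 6 => μ) {x | x i = x j} = 0 := by
  have hdiag : MeasurableSet {p : ℝ × ℝ | p.1 = p.2} :=
    measurableSet_eq_fun measurable_fst measurable_snd
  have hset : {x : Fin 6 → ℝ | x i = x j} =
      (fun x : Fin 6 → ℝ => (x i, x j)) ⁻¹' {p : ℝ × ℝ | p.1 = p.2} := rfl
  rw [hset, ← Measure.map_apply ((measurable_pi_apply i).prodMk (measurable_pi_apply j)) hdiag,
    map_pair μ i j hij, Measure.prod_apply hdiag]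
  have hfib : ∀ a : ℝ, (Prod.mk a ⁻¹' {p : ℝ × ℝ | p.1 = p.2}) = {a} := by
    intro a; ext b; simp [eq_comm]
  simp [hfib]

lemma noninj_null :
    (Measure.pi fun _ : Fin 6 => μ) {x | ¬ Function.Injective x} = 0 := by
  apply measure_mono_null
    (t := ⋃ (p : Fin 6 × Fin 6) (_ : p.1 ≠ p.2), {x : Fin 6 → ℝ | x p.1 = x p.2})
  · intro x hx
    simp only [mem_setOf_eq, Function.not_injective_iff] at hx
    obtain ⟨a, b, h1, h2⟩ := hx
    exact mem_iUnion.2 ⟨(a, b), mem_iUnion.2 ⟨h2, h1⟩⟩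
  · exact measure_iUnion_null fun p => measure_iUnion_null fun hp => diag_null μ _ _ hp

lemma compl_union_cells_null :
    (Measure.pi fun _ : Fin 6 => μ) (⋃ σ : Equiv.Perm (Fin 6), cell σ)ᶜ = 0 := by
  apply measure_mono_null (t := {x : Fin 6 → ℝ | ¬ Function.Injective x})
  · intro x hx
    simp only [mem_compl_iff, mem_iUnion, not_exists] at hx
    simp only [mem_setOf_eq]
    intro hinj
    apply hx (Tuple.sort x)
    exact (Tuple.monotone_sort x).strictMono_of_injective
      (hinj.comp (Tuple.sort x).injective)
  · exact noninj_null μ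

lemma union_cells_full :
    (Measure.pi fun _ : Fin 6 => μ) (⋃ σ : Equiv.Perm (Fin 6), cell σ) = 1 := by
  have hmeas : MeasurableSet (⋃ σ : Equiv.Perm (Fin 6), cell σ) :=
    MeasurableSet.iUnion fun σ => measurable_cell σ
  have := measure_add_measure_compl (μ := Measure.pi fun _ : Fin 6 => μ) hmeas
  rw [compl_union_cells_null μ, add_zero, measure_univ] at this
  exact this

lemma measure_cell (σ : Equiv.Perm (Fin 6)) :
    (Measure.pi fun _ : Fin 6 => μ) (cell σ) = (720 : ℝ≥0∞)⁻¹ := by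
  have hsum : ∑ τ : Equiv.Perm (Fin 6), (Measure.pi fun _ : Fin 6 => μ) (cell τ) = 1 := by
    rw [← tsum_fintype (L := SummationFilter.unconditional _), ← measure_iUnion cells_disjoint measurable_cell]
    exact union_cells_full μ
  have hconst : ∀ τ : Equiv.Perm (Fin 6),
      (Measure.pi fun _ : Fin 6 => μ) (cell τ) = (Measure.pi fun _ : Fin 6 => μ) (cell 1) :=
    fun τ => measure_cell_eq μ τ
  have hcard : (Fintype.card (Equiv.Perm (Fin 6)) : ℝ≥0∞) = 720 := by
    rw [Fintype.card_perm, Fintype.card_fin]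
    norm_num [Nat.factorial]
  have hmul : (720 : ℝ≥0∞) * (Measure.pi fun _ : Fin 6 => μ) (cell 1) = 1 := by
    rw [← hcard, ← hsum]
    simp only [hconst]
    rw [Finset.sum_const, Finset.card_univ, nsmul_eq_mul]
  rw [hconst σ, show (720 : ℝ≥0∞)⁻¹ = 1 / 720 by rw [one_div],
    ENNReal.eq_div_iff (by norm_num) (by norm_num)]
  exact hmul

lemma measure_pattern (S : Set (Fin 6 → ℝ)) (hS : MeasurableSet S)
    (Q : Equiv.Perm (Fin 6) → Prop) [DecidablePred Q]
    (h : ∀ σ : Equiv.Perm (Fin 6), ∀ x ∈ cell σ, (x ∈ S ↔ Q σ)) :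
    (Measure.pi fun _ : Fin 6 => μ) S =
      ((Finset.univ.filter Q).card : ℝ≥0∞) * (720 : ℝ≥0∞)⁻¹ := by
  set ν := Measure.pi fun _ : Fin 6 => μ
  have hUmeas : MeasurableSet (⋃ σ : Equiv.Perm (Fin 6), cell σ) :=
    MeasurableSet.iUnion fun σ => measurable_cell σ
  have hdiff : ν (S \ ⋃ σ : Equiv.Perm (Fin 6), cell σ) = 0 :=
    measure_mono_null (fun x hx => hx.2) (compl_union_cells_null μ)
  have hS' : ν S = ν (S ∩ ⋃ σ : Equiv.Perm (Fin 6), cell σ) := by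
    have := measure_inter_add_diff (μ := ν) S hUmeas
    rw [hdiff, add_zero] at this
    exact this.symm
  rw [hS', inter_iUnion, measure_iUnion
    (fun σ τ hne => ((cells_disjoint hne).mono inter_subset_right inter_subset_right))
    (fun σ => hS.inter (measurable_cell σ)), tsum_fintype]
  have hterm : ∀ σ : Equiv.Perm (Fin 6),
      ν (S ∩ cell σ) = if Q σ then (720 : ℝ≥0∞)⁻¹ else 0 := by
    intro σ
    split_ifs with hq
    · rw [inter_eq_right.mpr (fun x hx => (h σ x hx).2 hq)]
      exact measure_cell μ σ
    · have : S ∩ cell σ = ∅ :=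
        eq_empty_iff_forall_notMem.2 fun x hx => hq ((h σ x hx.2).1 hx.1)
      simp [this]
  simp only [hterm]
  rw [← Finset.sum_filter, Finset.sum_const, nsmul_eq_mul]

end FmThreeAux

open FmThreeAux

set_option maxRecDepth 10000

theorem fm_three_eq_one_third
    (μ : Measure ℝ) [IsProbabilityMeasure μ] [NullSingletonClass μ] :
    (Measure.pi fun _ : Fin 6 => μ)
        {x | x 0 < x 1 ∧ x 2 < x 1 ∧ x 3 < x 4 ∧ x 5 < x 4 ∧
             ¬(x 1 < x 2 ∧ x 3 < x 2) ∧ ¬(x 2 < x 3 ∧ x 4 < x 3)} /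
      (Measure.pi fun _ : Fin 6 => μ) {x | x 0 < x 1 ∧ x 2 < x 1} = 1 / 3 := by
  classical
  have hm : ∀ a b : Fin 6, MeasurableSet {x : Fin 6 → ℝ | x a < x b} :=
    fun a b => measurableSet_lt (measurable_pi_apply a) (measurable_pi_apply b)
  have key : ∀ (σ : Equiv.Perm (Fin 6)) (x : Fin 6 → ℝ), x ∈ cell σ →
      ∀ a b : Fin 6, (x a < x b ↔ σ.symm a < σ.symm b) := by
    intro σ x hx a b
    have h := hx.lt_iff_lt (a := σ.symm a) (b := σ.symm b)
    simpa using h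
  -- measure of A
  have hAmeas : MeasurableSet {x : Fin 6 → ℝ | x 0 < x 1 ∧ x 2 < x 1 ∧ x 3 < x 4 ∧ x 5 < x 4 ∧
      ¬(x 1 < x 2 ∧ x 3 < x 2) ∧ ¬(x 2 < x 3 ∧ x 4 < x 3)} := by
    have : {x : Fin 6 → ℝ | x 0 < x 1 ∧ x 2 < x 1 ∧ x 3 < x 4 ∧ x 5 < x 4 ∧
        ¬(x 1 < x 2 ∧ x 3 < x 2) ∧ ¬(x 2 < x 3 ∧ x 4 < x 3)} =
        {x : Fin 6 → ℝ | x 0 < x 1} ∩ ({x | x 2 < x 1} ∩ ({x | x 3 < x 4} ∩ ({x | x 5 < x 4} ∩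
          ((({x : Fin 6 → ℝ | x 1 < x 2} ∩ {x | x 3 < x 2})ᶜ) ∩
           (({x : Fin 6 → ℝ | x 2 < x 3} ∩ {x | x 4 < x 3})ᶜ))))) := rfl
    rw [this]
    exact (hm 0 1).inter ((hm 2 1).inter ((hm 3 4).inter ((hm 5 4).inter
      ((((hm 1 2).inter (hm 3 2)).compl).inter (((hm 2 3).inter (hm 4 3)).compl)))))
  have hBmeas : MeasurableSet {x : Fin 6 → ℝ | x 0 < x 1 ∧ x 2 < x 1} := by
    have : {x : Fin 6 → ℝ | x 0 < x 1 ∧ x 2 < x 1} =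
        {x : Fin 6 → ℝ | x 0 < x 1} ∩ {x | x 2 < x 1} := rfl
    rw [this]
    exact (hm 0 1).inter (hm 2 1)
  have hA := measure_pattern μ _ hAmeas
    (fun σ : Equiv.Perm (Fin 6) =>
      σ.symm 0 < σ.symm 1 ∧ σ.symm 2 < σ.symm 1 ∧ σ.symm 3 < σ.symm 4 ∧ σ.symm 5 < σ.symm 4 ∧
        ¬(σ.symm 1 < σ.symm 2 ∧ σ.symm 3 < σ.symm 2) ∧
        ¬(σ.symm 2 < σ.symm 3 ∧ σ.symm 4 < σ.symm 3))
    (by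
      intro σ x hx
      simp only [mem_setOf_eq, key σ x hx])
  have hB := measure_pattern μ _ hBmeas
    (fun σ : Equiv.Perm (Fin 6) => σ.symm 0 < σ.symm 1 ∧ σ.symm 2 < σ.symm 1)
    (by
      intro σ x hx
      simp only [mem_setOf_eq, key σ x hx])
  have hcardA : (Finset.univ.filter (fun σ : Equiv.Perm (Fin 6) =>
      σ.symm 0 < σ.symm 1 ∧ σ.symm 2 < σ.symm 1 ∧ σ.symm 3 < σ.symm 4 ∧ σ.symm 5 < σ.symm 4 ∧
        ¬(σ.symm 1 < σ.symm 2 ∧ σ.symm 3 < σ.symm 2) ∧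
        ¬(σ.symm 2 < σ.symm 3 ∧ σ.symm 4 < σ.symm 3))).card = 80 := by decide
  have hcardB : (Finset.univ.filter (fun σ : Equiv.Perm (Fin 6) =>
      σ.symm 0 < σ.symm 1 ∧ σ.symm 2 < σ.symm 1)).card = 240 := by decide
  rw [hA, hB, hcardA, hcardB]
  rw [show ((80 : ℕ) : ℝ≥0∞) = 80 by norm_num, show ((240 : ℕ) : ℝ≥0∞) = 240 by norm_num]
  rw [ENNReal.mul_div_mul_right 80 240 (by norm_num) (by norm_num)]
  rw [ENNReal.div_eq_div_iff (a := 3) (b := 240) (by norm_num) (by norm_num) (by norm_num)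
    (by norm_num)]
  norm_num
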